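/- With E, ≤_B, W, S_B, ℓ as above, the following are equivalent: (i) S_B generates W; (ii) ℓ(w) < ∞ for every w ∈ W; (iii) the linearly ordered set (E, ≤_B) is isomorphic to a subset of ℤ with its natural order (equivalently, every interval {e'' : e ≤_B e'' ≤_B e'} is finite). -/

import Mathlib

variable {E : Type*} [LinearOrder E]

/-- A transposition of two consecutive elements of the linearly ordered set `E`. -/
def IsConsecSwap (s : Equiv.Perm E) : Prop :=
  ∃ e e' : E, e ⋖ e' ∧ s = Equiv.swap e e'

/-- The length function associated to the set of transpositions of consecutive
elements, with value `⊤` when no expression exists. -/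
noncomputable def ellB (w : Equiv.Perm E) : ℕ∞ :=
  sInf {n : ℕ∞ | ∃ L : List (Equiv.Perm E),
    (∀ s ∈ L, IsConsecSwap s) ∧ L.prod = w ∧ (L.length : ℕ∞) = n}

namespace ConsecAux

/-- The set of inversions of a permutation. -/
def Invs (w : Equiv.Perm E) : Set (E × E) := {p | p.1 < p.2 ∧ w p.2 < w p.1}

lemma mem_invs {w : Equiv.Perm E} {p : E × E} :
    p ∈ Invs w ↔ p.1 < p.2 ∧ w p.2 < w p.1 := Iff.rfl

lemma swap_lt_swap {e e' x y : E} (h : e ⋖ e') (hxy : x < y)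
    (hne : ¬(x = e ∧ y = e')) : Equiv.swap e e' x < Equiv.swap e e' y := by
  rcases eq_or_ne x e with hxe | hxe
  · subst hxe
    rcases eq_or_ne y e' with hye' | hye'
    · exact absurd ⟨rfl, hye'⟩ hne
    · rw [Equiv.swap_apply_left, Equiv.swap_apply_of_ne_of_ne hxy.ne' hye']
      exact lt_of_le_of_ne (h.ge_of_gt hxy) (Ne.symm hye')
  · rcases eq_or_ne x e' with hxe' | hxe'
    · subst hxe'
      have hye : y ≠ e := (h.lt.trans hxy).ne'
      rw [Equiv.swap_apply_right, Equiv.swap_apply_of_ne_of_ne hye hxy.ne']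
      exact h.lt.trans hxy
    · rcases eq_or_ne y e with hye | hye
      · subst hye
        rw [Equiv.swap_apply_left, Equiv.swap_apply_of_ne_of_ne hxe hxe']
        exact hxy.trans h.lt
      · rcases eq_or_ne y e' with hye' | hye'
        · subst hye'
          rw [Equiv.swap_apply_right, Equiv.swap_apply_of_ne_of_ne hxe hxe']
          exact lt_of_le_of_ne (h.le_of_lt hxy) hxe
        · rw [Equiv.swap_apply_of_ne_of_ne hxe hxe',
            Equiv.swap_apply_of_ne_of_ne hye hye']
          exact hxy

lemma invs_one : Invs (1 : Equiv.Perm E) = ∅ := by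
  ext ⟨a, b⟩
  simp only [Invs, Equiv.Perm.coe_one, id_eq, Set.mem_setOf_eq,
    Set.mem_empty_iff_false, iff_false, not_and, not_lt]
  exact fun h => h.le

lemma invs_finite_of_word : ∀ L : List (Equiv.Perm E),
    (∀ s ∈ L, IsConsecSwap s) → (Invs L.prod).Finite := by
  intro L
  induction L with
  | nil => intro _; rw [List.prod_nil, invs_one]; exact Set.finite_empty
  | cons s L ih =>
    intro hL
    obtain ⟨e, e', he, rfl⟩ := hL s (List.mem_cons_self)
    have hv := ih (fun t ht => hL t (List.mem_cons_of_mem _ ht))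
    rw [List.prod_cons]
    set v := L.prod with hvdef
    have hsub : Invs (Equiv.swap e e' * v) ⊆ Invs v ∪ {(v⁻¹ e, v⁻¹ e')} := by
      rintro ⟨a, b⟩ hp
      obtain ⟨hab, hw⟩ := mem_invs.mp hp
      simp only [Equiv.Perm.mul_apply] at hw
      rcases lt_trichotomy (v a) (v b) with h1 | h1 | h1
      · by_cases hc : v a = e ∧ v b = e'
        · right
          have ha : a = v⁻¹ e := v.injective (by rw [← Equiv.Perm.mul_apply, mul_inv_cancel, Equiv.Perm.one_apply, hc.1])
          have hb : b = v⁻¹ e' := v.injective (by rw [← Equiv.Perm.mul_apply, mul_inv_cancel, Equiv.Perm.one_apply, hc.2])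
          simp [ha, hb]
        · exact absurd (swap_lt_swap he h1 hc) (not_lt.mpr hw.le)
      · exact absurd (v.injective h1) hab.ne
      · left; exact ⟨hab, h1⟩
    exact (hv.union (Set.finite_singleton _)).subset hsub

lemma invs_finite {f : E → ℤ} (hf : StrictMono f) {w : Equiv.Perm E}
    (hs : {e | w e ≠ e}.Finite) : (Invs w).Finite := by
  rcases hs.toFinset.eq_empty_or_nonempty with hT | hT
  · have hfix : ∀ x, w x = x := by
      intro x
      by_contra hx
      have := hs.mem_toFinset.mpr hx
      rw [hT] at this
      exact absurd this (Finset.notMem_empty x)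
    have hempty : Invs w = ∅ := by
      ext ⟨a, b⟩
      simp only [Invs, Set.mem_setOf_eq, Set.mem_empty_iff_false, iff_false,
        not_and, not_lt, hfix]
      exact fun h => h.le
    rw [hempty]; exact Set.finite_empty
  · set m := hs.toFinset.min' hT with hmdef
    set M := hs.toFinset.max' hT with hMdef
    have hle : ∀ x, w x ≠ x → m ≤ x ∧ x ≤ M := fun x hx =>
      ⟨hs.toFinset.min'_le x (hs.mem_toFinset.mpr hx),
       hs.toFinset.le_max' x (hs.mem_toFinset.mpr hx)⟩
    have hIcc : (Set.Icc m M).Finite := by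
      apply Set.Finite.of_finite_image (f := f)
      · apply (Set.finite_Icc (f m) (f M)).subset
        rintro _ ⟨x, hx, rfl⟩
        exact ⟨hf.monotone hx.1, hf.monotone hx.2⟩
      · exact fun a _ b _ h => hf.injective h
    apply (hIcc.prod hIcc).subset
    rintro ⟨a, b⟩ hp
    obtain ⟨hab, hw⟩ := mem_invs.mp hp
    have hma : m ≤ a := by
      by_cases ha : w a = a
      · have hb : w b ≠ b := by
          intro hb; rw [ha, hb] at hw; exact absurd hab (not_lt.mpr hw.le)
        have hwb : w (w b) ≠ w b := fun h => hb (w.injective h)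
        have hwa : w b < a := by rw [← ha]; exact hw
        exact ((hle _ hwb).1).trans hwa.le
      · exact (hle a ha).1
    have hbM : b ≤ M := by
      by_cases hb : w b = b
      · have ha : w a ≠ a := by
          intro ha; rw [ha, hb] at hw; exact absurd hab (not_lt.mpr hw.le)
        have hwa : w (w a) ≠ w a := fun h => ha (w.injective h)
        have hblt : b < w a := by rw [← hb]; exact hw
        exact hblt.le.trans (hle _ hwa).2
      · exact (hle b hb).2
    exact ⟨⟨hma, hab.le.trans hbM⟩, ⟨hma.trans hab.le, hbM⟩⟩

lemma exists_consec_inversion {f : E → ℤ} (hf : StrictMono f) (w : Equiv.Perm E) :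
    ∀ n : ℕ, ∀ a b : E, (f b - f a).toNat ≤ n → a < b → w b < w a →
      ∃ e e', e ⋖ e' ∧ w e' < w e := by
  intro n
  induction n with
  | zero =>
    intro a b hn hab _
    have h1 : f a < f b := hf hab
    omega
  | succ n ih =>
    intro a b hn hab hw
    by_cases hc : a ⋖ b
    · exact ⟨a, b, hc, hw⟩
    · obtain ⟨c, hac, hcb⟩ := exists_lt_lt_of_not_covBy hab hc
      have h1 : f a < f c := hf hac
      have h2 : f c < f b := hf hcb
      rcases lt_or_ge (w c) (w a) with h | h
      · exact ih a c (by omega) hac h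
      · exact ih c b (by omega) hcb (lt_of_lt_of_le hw h)

lemma eq_one_of_invs_empty {w : Equiv.Perm E} (hs : {e | w e ≠ e}.Finite)
    (hinv : Invs w = ∅) : w = 1 := by
  have hmono : StrictMono w := by
    intro a b hab
    rcases lt_trichotomy (w a) (w b) with h | h | h
    · exact h
    · exact absurd (w.injective h) hab.ne
    · have hmem : ((a, b) : E × E) ∈ Invs w := ⟨hab, h⟩
      rw [hinv] at hmem
      exact hmem.elim
  rcases hs.toFinset.eq_empty_or_nonempty with hT | hT
  · have hfix : ∀ x, w x = x := by
      intro x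
      by_contra hx
      have := hs.mem_toFinset.mpr hx
      rw [hT] at this
      exact absurd this (Finset.notMem_empty x)
    exact Equiv.ext fun x => by simp [hfix x]
  · exfalso
    set M := hs.toFinset.max' hT with hMdef
    have hM : w M ≠ M := hs.mem_toFinset.mp (hs.toFinset.max'_mem hT)
    have hinvM : w⁻¹ M ≠ M := fun h => hM (Equiv.Perm.inv_eq_iff_eq.mp h).symm
    have h1 : w (w⁻¹ M) ≠ w⁻¹ M := by
      rw [← Equiv.Perm.mul_apply, mul_inv_cancel, Equiv.Perm.one_apply]; exact Ne.symm hinvM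
    have h2 : w⁻¹ M ≤ M := hs.toFinset.le_max' _ (hs.mem_toFinset.mpr h1)
    have h3 : w⁻¹ M < M := h2.lt_of_ne hinvM
    have h4 : M < w M := by
      have := hmono h3
      rwa [← Equiv.Perm.mul_apply, mul_inv_cancel, Equiv.Perm.one_apply] at this
    have h5 : w (w M) ≠ w M := fun h => hM (w.injective h)
    have h6 : w M ≤ M := hs.toFinset.le_max' _ (hs.mem_toFinset.mpr h5)
    exact absurd h4 (not_lt.mpr h6)

lemma exists_word {f : E → ℤ} (hf : StrictMono f) :
    ∀ n : ℕ, ∀ w : Equiv.Perm E, {e | w e ≠ e}.Finite → (Invs w).ncard ≤ n →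
      ∃ L : List (Equiv.Perm E), (∀ s ∈ L, IsConsecSwap s) ∧ L.prod = w := by
  intro n
  induction n with
  | zero =>
    intro w hs hn
    have hfin := invs_finite hf hs
    have hempty : Invs w = ∅ := (Set.ncard_eq_zero hfin).mp (Nat.le_zero.mp hn)
    exact ⟨[], fun s h => absurd h (List.not_mem_nil),
      by simp [eq_one_of_invs_empty hs hempty]⟩
  | succ n ih =>
    intro w hs hn
    have hfin := invs_finite hf hs
    rcases Set.eq_empty_or_nonempty (Invs w) with h0 | ⟨⟨a, b⟩, hp⟩
    · exact ⟨[], fun s h => absurd h (List.not_mem_nil),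
        by simp [eq_one_of_invs_empty hs h0]⟩
    obtain ⟨hab, hwba⟩ := mem_invs.mp hp
    obtain ⟨e, e', he, hee'⟩ :=
      exists_consec_inversion hf w (f b - f a).toNat a b le_rfl hab hwba
    have hmemee : ((e, e') : E × E) ∈ Invs w := ⟨he.lt, hee'⟩
    set w' := w * Equiv.swap e e' with hw'
    have hs' : {x | w' x ≠ x}.Finite := by
      refine (hs.union ((Set.finite_singleton e').insert e)).subset ?_
      intro x hx
      by_contra hnx
      simp only [Set.mem_union, Set.mem_setOf_eq, Set.mem_insert_iff,
        Set.mem_singleton_iff, not_or] at hnx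
      obtain ⟨hfx, hxe, hxe'⟩ := hnx
      apply hx
      show w' x = x
      rw [hw', Equiv.Perm.mul_apply, Equiv.swap_apply_of_ne_of_ne hxe hxe',
        not_not.mp hfx]
    have hcard : (Invs w').ncard < (Invs w).ncard := by
      have hmaps : ∀ p ∈ Invs w',
          (Equiv.swap e e' p.1, Equiv.swap e e' p.2) ∈ Invs w \ {((e, e') : E × E)} := by
        rintro ⟨a', b'⟩ hq
        obtain ⟨h1, h2⟩ := mem_invs.mp hq
        simp only [hw', Equiv.Perm.mul_apply] at h2
        have hne : ¬(a' = e ∧ b' = e') := by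
          rintro ⟨rfl, rfl⟩
          rw [Equiv.swap_apply_left, Equiv.swap_apply_right] at h2
          exact absurd h2 (not_lt.mpr hee'.le)
        have hlt : Equiv.swap e e' a' < Equiv.swap e e' b' := swap_lt_swap he h1 hne
        refine ⟨⟨hlt, h2⟩, ?_⟩
        simp only [Set.mem_singleton_iff, Prod.mk.injEq, not_and]
        intro hae hbe
        have ha' : a' = e' := by
          have h := congrArg (Equiv.swap e e') hae
          rwa [Equiv.swap_apply_self, Equiv.swap_apply_left] at h
        have hb' : b' = e := by
          have h := congrArg (Equiv.swap e e') hbe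
          rwa [Equiv.swap_apply_self, Equiv.swap_apply_right] at h
        rw [ha', hb'] at h1
        exact absurd he.lt (not_lt.mpr h1.le)
      have hinj : Set.InjOn
          (fun p : E × E => (Equiv.swap e e' p.1, Equiv.swap e e' p.2)) (Invs w') := by
        rintro ⟨a1, b1⟩ _ ⟨a2, b2⟩ _ hpq
        simp only [Prod.mk.injEq] at hpq ⊢
        exact ⟨(Equiv.swap e e').injective hpq.1, (Equiv.swap e e').injective hpq.2⟩
      calc (Invs w').ncard ≤ (Invs w \ {((e, e') : E × E)}).ncard :=
            Set.ncard_le_ncard_of_injOn _ hmaps hinj hfin.diff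
        _ < (Invs w).ncard := Set.ncard_diff_singleton_lt_of_mem hmemee hfin
    obtain ⟨L, hL1, hL2⟩ := ih w' hs' (by omega)
    refine ⟨L ++ [Equiv.swap e e'], ?_, ?_⟩
    · intro t ht
      rcases List.mem_append.mp ht with h | h
      · exact hL1 t h
      · rw [List.mem_singleton.mp h]
        exact ⟨e, e', he, rfl⟩
    · rw [List.prod_append, hL2, List.prod_singleton, hw', mul_assoc,
        Equiv.swap_mul_self, mul_one]

lemma ellB_ne_top_iff (w : Equiv.Perm E) :
    ellB w ≠ ⊤ ↔ ∃ L : List (Equiv.Perm E), (∀ s ∈ L, IsConsecSwap s) ∧ L.prod = w := by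
  constructor
  · intro h
    have hne : {n : ℕ∞ | ∃ L : List (Equiv.Perm E),
        (∀ s ∈ L, IsConsecSwap s) ∧ L.prod = w ∧ (L.length : ℕ∞) = n}.Nonempty := by
      by_contra hc
      rw [Set.not_nonempty_iff_eq_empty] at hc
      apply h
      rw [ellB, hc, sInf_empty]
    obtain ⟨n, L, h1, h2, _⟩ := hne
    exact ⟨L, h1, h2⟩
  · rintro ⟨L, h1, h2⟩
    have hle : ellB w ≤ (L.length : ℕ∞) := sInf_le ⟨L, h1, h2, rfl⟩
    intro htop
    rw [htop, top_le_iff] at hle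
    exact ENat.coe_ne_top _ hle

end ConsecAux

open ConsecAux in
/-- The following are equivalent: (i) the transpositions of consecutive elements generate
the group of finitary permutations of `E`; (ii) every finitary permutation has finite
length; (iii) `(E, ≤)` is isomorphic to a subset of `ℤ` with its natural order. -/
theorem generators_length_integers_tfae [Countable E] :
    ((∀ w : Equiv.Perm E, {e : E | w e ≠ e}.Finite →
        w ∈ Subgroup.closure {s : Equiv.Perm E | IsConsecSwap s}) ↔
      (∀ w : Equiv.Perm E, {e : E | w e ≠ e}.Finite → ellB w ≠ ⊤)) ∧
    ((∀ w : Equiv.Perm E, {e : E | w e ≠ e}.Finite → ellB w ≠ ⊤) ↔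
      (∃ f : E → ℤ, StrictMono f)) := by
  constructor
  · constructor
    · -- (i) → (ii)
      intro h1 w hw
      have hmem := h1 w hw
      have hm : w ∈ Submonoid.closure
          ({s : Equiv.Perm E | IsConsecSwap s} ∪ {s : Equiv.Perm E | IsConsecSwap s}⁻¹) := by
        rw [← Subgroup.closure_toSubmonoid]
        exact hmem
      obtain ⟨L, hL1, hL2⟩ := Submonoid.exists_list_of_mem_closure hm
      rw [ellB_ne_top_iff]
      refine ⟨L, ?_, hL2⟩
      intro s hsL
      rcases hL1 s hsL with h | h
      · exact h
      · rw [Set.mem_inv] at h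
        obtain ⟨e, e', he, heq⟩ := h
        exact ⟨e, e', he, by rw [← inv_inv s, heq, Equiv.swap_inv]⟩
    · -- (ii) → (i)
      intro h2 w hw
      obtain ⟨L, hL1, hL2⟩ := (ellB_ne_top_iff w).mp (h2 w hw)
      rw [← hL2]
      exact list_prod_mem (fun s hs => Subgroup.subset_closure (hL1 s hs))
  · constructor
    · -- (ii) → (iii)
      intro h2
      rcases isEmpty_or_nonempty E with hE | hE
      · exact ⟨fun _ => 0, fun {a} {b} _ => isEmptyElim a⟩
      obtain ⟨e0⟩ := hE
      have hIcc : ∀ a b : E, (Set.Icc a b).Finite := by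
        intro a b
        rcases lt_trichotomy a b with h | h | h
        · have hsw : {e | Equiv.swap a b e ≠ e}.Finite := by
            refine ((Set.finite_singleton b).insert a).subset ?_
            intro x hx
            by_contra hmem
            simp only [Set.mem_insert_iff, Set.mem_singleton_iff, not_or] at hmem
            exact hx (Equiv.swap_apply_of_ne_of_ne hmem.1 hmem.2)
          obtain ⟨L, hL1, hL2⟩ := (ellB_ne_top_iff _).mp (h2 _ hsw)
          have hfin : (Invs (Equiv.swap a b)).Finite := hL2 ▸ invs_finite_of_word L hL1
          have hIoo : (Set.Ioo a b).Finite := by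
            have hsub : (fun x => ((a, x) : E × E)) '' Set.Ioo a b ⊆
                Invs (Equiv.swap a b) := by
              rintro _ ⟨x, hx, rfl⟩
              refine ⟨hx.1, ?_⟩
              rw [Equiv.swap_apply_left, Equiv.swap_apply_of_ne_of_ne hx.1.ne' hx.2.ne]
              exact hx.2
            exact Set.Finite.of_finite_image (hfin.subset hsub)
              (fun x _ y _ hxy => by
                simpa using (Prod.mk.injEq a x a y ▸ hxy).2)
          have hsub2 : Set.Icc a b ⊆ insert a (insert b (Set.Ioo a b)) := by
            intro x hx
            rcases eq_or_lt_of_le hx.1 with h1 | h1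
            · exact Set.mem_insert_iff.mpr (Or.inl h1.symm)
            · rcases eq_or_lt_of_le hx.2 with h2 | h2
              · exact Set.mem_insert_iff.mpr (Or.inr (Set.mem_insert_iff.mpr (Or.inl h2)))
              · exact Set.mem_insert_iff.mpr (Or.inr (Set.mem_insert_iff.mpr
                  (Or.inr ⟨h1, h2⟩)))
          exact ((hIoo.insert b).insert a).subset hsub2
        · subst h
          rw [Set.Icc_self]
          exact Set.finite_singleton a
        · rw [Set.Icc_eq_empty (not_le.mpr h)]
          exact Set.finite_empty
      refine ⟨fun e => if e0 ≤ e then ((Set.Ioc e0 e).ncard : ℤ)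
        else -((Set.Ico e e0).ncard : ℤ), ?_⟩
      intro a b hab
      by_cases ha : e0 ≤ a
      · have hb : e0 ≤ b := ha.trans hab.le
        simp only [if_pos ha, if_pos hb]
        have hfinb : (Set.Ioc e0 b).Finite := (hIcc e0 b).subset Set.Ioc_subset_Icc_self
        have hss : Set.Ioc e0 a ⊂ Set.Ioc e0 b := by
          refine ⟨Set.Ioc_subset_Ioc_right hab.le, fun hcon => ?_⟩
          have hbmem : b ∈ Set.Ioc e0 b := ⟨ha.trans_lt hab, le_rfl⟩
          exact absurd (hcon hbmem).2 (not_le.mpr hab)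
        exact_mod_cast Set.ncard_lt_ncard hss hfinb
      · by_cases hb : e0 ≤ b
        · simp only [if_neg ha, if_pos hb]
          have hfina : (Set.Ico a e0).Finite := (hIcc a e0).subset Set.Ico_subset_Icc_self
          have h1 : 0 < (Set.Ico a e0).ncard :=
            (Set.ncard_pos hfina).mpr ⟨a, le_rfl, not_le.mp ha⟩
          have h2 : (0 : ℤ) ≤ ((Set.Ioc e0 b).ncard : ℤ) := Int.ofNat_nonneg _
          omega
        · simp only [if_neg ha, if_neg hb]
          have hfina : (Set.Ico a e0).Finite := (hIcc a e0).subset Set.Ico_subset_Icc_self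
          have hss : Set.Ico b e0 ⊂ Set.Ico a e0 := by
            refine ⟨Set.Ico_subset_Ico_left hab.le, fun hcon => ?_⟩
            have hamem : a ∈ Set.Ico a e0 := ⟨le_rfl, not_le.mp ha⟩
            exact absurd (hcon hamem).1 (not_le.mpr hab)
          have := Set.ncard_lt_ncard hss hfina
          omega
    · -- (iii) → (ii)
      rintro ⟨f, hf⟩ w hw
      rw [ellB_ne_top_iff]
      exact exists_word hf (Invs w).ncard w hw le_rfl
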